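/- Let H be a complex Hilbert space and let A, B : H → H be bounded linear operators with closed ranges. Then the composition AB has closed range if and only if c[ R(B), N(A) ] < 1, where c[·,·] denotes the cosine of the angle between the (closed) range of B and the kernel of A. -/

import Mathlib

open ContinuousLinearMap

variable {H : Type*} [NormedAddCommGroup H] [InnerProductSpace ℂ H] [CompleteSpace H]

/-- The orthogonal projection of `H` onto a closed subspace `K`, as an operator `H →L[ℂ] H`. -/
noncomputable def projCLM (K : Submodule ℂ H) (hK : IsClosed (K : Set H)) : H →L[ℂ] H :=
  haveI : CompleteSpace K := hK.completeSpace_coe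
  K.subtypeL.comp K.orthogonalProjectionOnto

/-- The cosine of the angle between two closed subspaces `M`, `N` of a Hilbert space:
`c[M, N] = ‖P_M ∘ P_N ∘ P_{(M ⊓ N)ᗮ}‖`. -/
noncomputable def cosAngle (M N : Submodule ℂ H) (hM : IsClosed (M : Set H))
    (hN : IsClosed (N : Set H)) : ℝ :=
  ‖(projCLM M hM).comp ((projCLM N hN).comp
      (projCLM (M ⊓ N)ᗮ (M ⊓ N).isClosed_orthogonal))‖

section AuxLemmas

lemma projCLM_apply_mem (K : Submodule ℂ H) (hK : IsClosed (K : Set H)) (x : H) :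
    projCLM K hK x ∈ K := by
  haveI : CompleteSpace K := hK.completeSpace_coe
  exact SetLike.coe_mem (K.orthogonalProjectionOnto x)

lemma projCLM_eq_self (K : Submodule ℂ H) (hK : IsClosed (K : Set H)) {x : H} (hx : x ∈ K) :
    projCLM K hK x = x := by
  haveI : CompleteSpace K := hK.completeSpace_coe
  exact K.starProjection_eq_self_iff.2 hx

lemma norm_projCLM_le (K : Submodule ℂ H) (hK : IsClosed (K : Set H)) (x : H) :
    ‖projCLM K hK x‖ ≤ ‖x‖ := by
  haveI : CompleteSpace K := hK.completeSpace_coe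
  have h : ‖projCLM K hK x‖ = ‖K.orthogonalProjectionOnto x‖ := rfl
  rw [h]
  simpa using K.orthogonalProjectionOnto.le_of_opNorm_le K.orthogonalProjectionOnto_norm_le x

lemma inner_projCLM (K : Submodule ℂ H) (hK : IsClosed (K : Set H)) (u v : H) :
    (inner ℂ (projCLM K hK u) v : ℂ) = inner ℂ u (projCLM K hK v) := by
  haveI : CompleteSpace K := hK.completeSpace_coe
  exact K.inner_starProjection_left_eq_right u v

lemma sub_projCLM_mem_orthogonal (K : Submodule ℂ H) (hK : IsClosed (K : Set H)) (x : H) :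
    x - projCLM K hK x ∈ Kᗮ := by
  haveI : CompleteSpace K := hK.completeSpace_coe
  exact Submodule.sub_starProjection_mem_orthogonal x

/-- A bounded operator with closed range is bounded below on the orthogonal complement of
its kernel (open mapping theorem). -/
lemma exists_norm_le_of_isClosed_range (T : H →L[ℂ] H)
    (hT : IsClosed ((LinearMap.range (T : H →ₗ[ℂ] H) : Submodule ℂ H) : Set H)) :
    ∃ γ : ℝ, ∀ x ∈ (LinearMap.ker (T : H →ₗ[ℂ] H))ᗮ, ‖x‖ ≤ γ * ‖T x‖ := by
  haveI : CompleteSpace (LinearMap.range (T : H →ₗ[ℂ] H) : Submodule ℂ H) := hT.completeSpace_coe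
  haveI : CompleteSpace ((LinearMap.ker (T : H →ₗ[ℂ] H))ᗮ : Submodule ℂ H) :=
    (LinearMap.ker (T : H →ₗ[ℂ] H)).isClosed_orthogonal.completeSpace_coe
  haveI : CompleteSpace (LinearMap.ker (T : H →ₗ[ℂ] H) : Submodule ℂ H) := (isClosed_ker T).completeSpace_coe
  set T' : ((LinearMap.ker (T : H →ₗ[ℂ] H))ᗮ : Submodule ℂ H) →L[ℂ] (LinearMap.range (T : H →ₗ[ℂ] H) : Submodule ℂ H) :=
    (T.comp (LinearMap.ker (T : H →ₗ[ℂ] H))ᗮ.subtypeL).codRestrict _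
      (fun x => LinearMap.mem_range_self _ _) with hT'def
  have hker : LinearMap.ker (T' : ((LinearMap.ker (T : H →ₗ[ℂ] H))ᗮ : Submodule ℂ H) →ₗ[ℂ] (LinearMap.range (T : H →ₗ[ℂ] H) : Submodule ℂ H)) = ⊥ := by
    rw [Submodule.eq_bot_iff]
    rintro ⟨x, hx⟩ hx0
    have hxk : x ∈ LinearMap.ker (T : H →ₗ[ℂ] H) := by
      have : T x = 0 := by
        have := congrArg (Subtype.val) hx0
        exact this
      simpa [LinearMap.mem_ker] using this
    have : x = 0 :=
      Submodule.disjoint_def.1 (Submodule.orthogonal_disjoint (LinearMap.ker (T : H →ₗ[ℂ] H))) x hxk hx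
    simp [this]
  have hrange : LinearMap.range (T' : ((LinearMap.ker (T : H →ₗ[ℂ] H))ᗮ : Submodule ℂ H) →ₗ[ℂ] (LinearMap.range (T : H →ₗ[ℂ] H) : Submodule ℂ H)) = ⊤ := by
    rw [LinearMap.range_eq_top]
    rintro ⟨y, x, rfl⟩
    refine ⟨⟨x - ((LinearMap.ker (T : H →ₗ[ℂ] H)).orthogonalProjectionOnto x : H),
      Submodule.sub_starProjection_mem_orthogonal x⟩, ?_⟩
    apply Subtype.ext
    have h0 : T ((LinearMap.ker (T : H →ₗ[ℂ] H)).starProjection x) = 0 :=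
      ((LinearMap.ker (T : H →ₗ[ℂ] H)).orthogonalProjectionOnto x).2
    change T (x - (LinearMap.ker (T : H →ₗ[ℂ] H)).starProjection x) = T x
    simp [hT'def, map_sub, h0]
  set e := ContinuousLinearEquiv.ofBijective T' hker hrange with he
  refine ⟨‖(e.symm : (LinearMap.range (T : H →ₗ[ℂ] H) : Submodule ℂ H) →L[ℂ]
    ((LinearMap.ker (T : H →ₗ[ℂ] H))ᗮ : Submodule ℂ H))‖, fun x hx => ?_⟩
  have h1 : e.symm (e ⟨x, hx⟩) = ⟨x, hx⟩ := e.symm_apply_apply _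
  have h2 : ‖e ⟨x, hx⟩‖ = ‖T x‖ := by
    have : e ⟨x, hx⟩ = T' ⟨x, hx⟩ := rfl
    rw [this]
    rfl
  calc ‖x‖ = ‖e.symm (e ⟨x, hx⟩)‖ := by rw [h1]; rfl
    _ ≤ ‖(e.symm : (LinearMap.range (T : H →ₗ[ℂ] H) : Submodule ℂ H) →L[ℂ]
          ((LinearMap.ker (T : H →ₗ[ℂ] H))ᗮ : Submodule ℂ H))‖ * ‖e ⟨x, hx⟩‖ :=
        (e.symm : (LinearMap.range (T : H →ₗ[ℂ] H) : Submodule ℂ H) →L[ℂ]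
          ((LinearMap.ker (T : H →ₗ[ℂ] H))ᗮ : Submodule ℂ H)).le_opNorm _
    _ = _ := by rw [h2]

/-- If `T` has closed range and `K` is a closed subspace containing the kernel of `T`,
then `T(K)` is closed. -/
lemma isClosed_map_of_ker_le (T : H →L[ℂ] H)
    (hT : IsClosed ((LinearMap.range (T : H →ₗ[ℂ] H) : Submodule ℂ H) : Set H))
    (K : Submodule ℂ H) (hK : IsClosed (K : Set H)) (hle : LinearMap.ker (T : H →ₗ[ℂ] H) ≤ K) :
    IsClosed ((Submodule.map (T : H →ₗ[ℂ] H) K : Submodule ℂ H) : Set H) := by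
  haveI : CompleteSpace (LinearMap.ker (T : H →ₗ[ℂ] H) : Submodule ℂ H) := (isClosed_ker T).completeSpace_coe
  obtain ⟨γ, hγ⟩ := exists_norm_le_of_isClosed_range T hT
  set L : Submodule ℂ H := K ⊓ (LinearMap.ker (T : H →ₗ[ℂ] H))ᗮ with hLdef
  have hLc : IsClosed (L : Set H) := by
    have h : (L : Set H) = (K : Set H) ∩ ((LinearMap.ker (T : H →ₗ[ℂ] H))ᗮ : Set H) := rfl
    rw [h]
    exact hK.inter (LinearMap.ker (T : H →ₗ[ℂ] H)).isClosed_orthogonal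
  haveI : CompleteSpace L := hLc.completeSpace_coe
  have hmapeq : Submodule.map (T : H →ₗ[ℂ] H) K = Submodule.map (T : H →ₗ[ℂ] H) L := by
    refine le_antisymm ?_ (Submodule.map_mono inf_le_left)
    rintro _ ⟨x, hx, rfl⟩
    refine ⟨x - ((LinearMap.ker (T : H →ₗ[ℂ] H)).orthogonalProjectionOnto x : H),
      ⟨Submodule.sub_mem K hx (hle ((LinearMap.ker (T : H →ₗ[ℂ] H)).orthogonalProjectionOnto x).2),
        Submodule.sub_starProjection_mem_orthogonal x⟩, ?_⟩
    have h0 : T ((LinearMap.ker (T : H →ₗ[ℂ] H)).starProjection x) = 0 :=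
      ((LinearMap.ker (T : H →ₗ[ℂ] H)).orthogonalProjectionOnto x).2
    simp [map_sub, h0]
  rw [hmapeq]
  set f : L →L[ℂ] H := T.comp L.subtypeL with hfdef
  have hbound : ∀ x : L, ‖x‖ ≤ γ.toNNReal * ‖f x‖ := by
    intro x
    calc ‖x‖ ≤ γ * ‖T x‖ := hγ x x.2.2
      _ ≤ γ.toNNReal * ‖T x‖ :=
          mul_le_mul_of_nonneg_right (Real.le_coe_toNNReal γ) (norm_nonneg _)
      _ = γ.toNNReal * ‖f x‖ := rfl
  have hal : AntilipschitzWith γ.toNNReal f := f.antilipschitz_of_bound hbound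
  have hcl : IsClosed (Set.range f) := hal.isClosed_range f.uniformContinuous
  have hset : (Submodule.map (T : H →ₗ[ℂ] H) L : Set H) = Set.range f := by
    ext z
    simp only [Set.mem_range, SetLike.mem_coe, Submodule.mem_map]
    constructor
    · rintro ⟨x, hx, rfl⟩; exact ⟨⟨x, hx⟩, rfl⟩
    · rintro ⟨x, rfl⟩; exact ⟨x, x.2, rfl⟩
  rw [hset]; exact hcl

omit [CompleteSpace H] in
lemma inner_bound_of_norm_le {M N' : Submodule ℂ H} {C : ℝ}
    (hC : ∀ m ∈ M, ∀ n ∈ N', ‖m‖ ≤ C * ‖m + n‖) :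
    ∀ m ∈ M, ∀ n ∈ N',
      ‖(inner ℂ m n : ℂ)‖ ≤ (1 - 1 / (2 * (max C 1) ^ 2)) * (‖m‖ * ‖n‖) := by
  set D := max C 1 with hD
  have hD1 : (1 : ℝ) ≤ D := le_max_right _ _
  have hD0 : (0 : ℝ) < D := lt_of_lt_of_le one_pos hD1
  have hρ0 : (0 : ℝ) ≤ 1 - 1 / (2 * D ^ 2) := by
    rw [sub_nonneg, div_le_one (by positivity)]
    nlinarith
  intro m hm n hn
  by_cases hz : (inner ℂ m n : ℂ) = 0
  · rw [hz]
    simpa using mul_nonneg hρ0 (mul_nonneg (norm_nonneg m) (norm_nonneg n))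
  have hm0 : m ≠ 0 := by rintro rfl; simp at hz
  have hn0 : n ≠ 0 := by rintro rfl; simp at hz
  set a := ‖m‖ with ha
  set b := ‖n‖ with hb
  have ha0 : 0 < a := norm_pos_iff.2 hm0
  have hb0 : 0 < b := norm_pos_iff.2 hn0
  set z : ℂ := inner ℂ m n with hzdef
  have hz0 : 0 < ‖z‖ := norm_pos_iff.2 hz
  set w : ℂ := -((a / b : ℝ) : ℂ) * (starRingEnd ℂ z) / (‖z‖ : ℂ) with hw
  set n' : H := w • n with hn'
  have hn'mem : n' ∈ N' := Submodule.smul_mem _ _ hn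
  have hwnorm : ‖w‖ = a / b := by
    have h : ‖w‖ = (a / b) * ‖z‖ / ‖z‖ := by
      rw [hw, norm_div, norm_mul, norm_neg, Complex.norm_real, Real.norm_eq_abs,
        abs_of_pos (div_pos ha0 hb0), RCLike.norm_conj, Complex.norm_real, Real.norm_eq_abs,
        abs_of_pos hz0]
    rw [h, mul_div_assoc, div_self hz0.ne', mul_one]
  have hn'norm : ‖n'‖ = a := by
    rw [hn', norm_smul, hwnorm]
    field_simp
    exact hb.symm
  have hz' : ((‖z‖ : ℝ) : ℂ) ≠ 0 := by exact_mod_cast hz0.ne'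
  have hinner : (inner ℂ m n' : ℂ) = -((a / b * ‖z‖ : ℝ) : ℂ) := by
    have h1 : (inner ℂ m n' : ℂ) = w * z := by rw [hn', inner_smul_right, ← hzdef]
    rw [h1, hw, div_mul_eq_mul_div, mul_assoc, RCLike.conj_mul]
    push_cast
    rw [sq]
    have habs : ((‖z‖ : ℝ) : ℂ) ≠ 0 := hz'
    field_simp [habs]
    rfl
  have hre : RCLike.re (inner ℂ m n' : ℂ) = -(a / b * ‖z‖) := by
    rw [hinner]
    simp
  have hCb := hC m hm n' hn'mem
  have hDb : a ≤ D * ‖m + n'‖ :=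
    le_trans hCb (mul_le_mul_of_nonneg_right (le_max_left C 1) (norm_nonneg _))
  have hsq : a ^ 2 ≤ D ^ 2 * ‖m + n'‖ ^ 2 := by
    have h := mul_self_le_mul_self ha0.le hDb
    calc a ^ 2 = a * a := sq a
      _ ≤ (D * ‖m + n'‖) * (D * ‖m + n'‖) := h
      _ = D ^ 2 * ‖m + n'‖ ^ 2 := by ring
  have hexp : ‖m + n'‖ ^ 2 = 2 * a ^ 2 - 2 * (a / b * ‖z‖) := by
    rw [norm_add_sq (𝕜 := ℂ), hre, hn'norm, ← ha]
    ring
  rw [hexp] at hsq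
  have key : 2 * D ^ 2 * (a / b * ‖z‖) ≤ (2 * D ^ 2 - 1) * a ^ 2 := by nlinarith
  rw [div_mul_eq_mul_div] at key
  have hD2 : (0:ℝ) < 2 * D ^ 2 := by positivity
  rw [← sub_nonneg]
  have expand : (1 - 1 / (2 * D ^ 2)) * (a * b) - ‖z‖
      = ((2 * D ^ 2 - 1) * (a * b) - (2 * D ^ 2) * ‖z‖) / (2 * D ^ 2) := by
    field_simp <;> ring
  rw [expand]
  apply div_nonneg _ hD2.le
  have hmul : 2 * D ^ 2 * (a * ‖z‖) ≤ (2 * D ^ 2 - 1) * a ^ 2 * b := by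
    have h := mul_le_mul_of_nonneg_right key hb0.le
    calc 2 * D ^ 2 * (a * ‖z‖) = 2 * D ^ 2 * (a * ‖z‖ / b) * b := by field_simp
      _ ≤ (2 * D ^ 2 - 1) * a ^ 2 * b := h
  nlinarith

end AuxLemmas

set_option maxHeartbeats 2000000 in
/-- **Closed range of a product and angles.**
If `A, B` are bounded operators on a complex Hilbert space with closed ranges, then `A ∘ B`
has closed range if and only if the cosine of the angle between `R(B)` and `N(A)` is `< 1`. -/
theorem closedRange_comp_iff_cosAngle_lt_one
    (A B : H →L[ℂ] H)
    (hA : IsClosed ((LinearMap.range (A : H →ₗ[ℂ] H) : Submodule ℂ H) : Set H))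
    (hB : IsClosed ((LinearMap.range (B : H →ₗ[ℂ] H) : Submodule ℂ H) : Set H)) :
    IsClosed ((LinearMap.range ((A.comp B : H →L[ℂ] H) : H →ₗ[ℂ] H) : Submodule ℂ H) : Set H) ↔
      cosAngle (LinearMap.range (B : H →ₗ[ℂ] H)) (LinearMap.ker (A : H →ₗ[ℂ] H)) hB (isClosed_ker A) < 1 := by
  set M : Submodule ℂ H := LinearMap.range (B : H →ₗ[ℂ] H) with hMdef
  set N : Submodule ℂ H := LinearMap.ker (A : H →ₗ[ℂ] H) with hNdef
  have hN : IsClosed (N : Set H) := isClosed_ker A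
  set S : Submodule ℂ H := (M ⊓ N)ᗮ with hSdef
  have hSc : IsClosed (S : Set H) := (M ⊓ N).isClosed_orthogonal
  have hMNc : IsClosed ((M ⊓ N : Submodule ℂ H) : Set H) := by
    have h : ((M ⊓ N : Submodule ℂ H) : Set H) = (M : Set H) ∩ (N : Set H) := rfl
    rw [h]; exact hB.inter hN
  set N' : Submodule ℂ H := N ⊓ S with hN'def
  have hN'c : IsClosed ((N' : Submodule ℂ H) : Set H) := by
    have h : ((N' : Submodule ℂ H) : Set H) = (N : Set H) ∩ (S : Set H) := rfl
    rw [h]; exact hN.inter hSc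
  haveI : CompleteSpace (M ⊓ N : Submodule ℂ H) := hMNc.completeSpace_coe
  haveI : CompleteSpace M := hB.completeSpace_coe
  haveI : CompleteSpace N' := hN'c.completeSpace_coe
  -- the sum `M + N` equals the sum `M + N'`
  have hsup : M ⊔ N' = M ⊔ N := by
    refine le_antisymm (sup_le_sup_left inf_le_left M) (sup_le le_sup_left ?_)
    intro n hn
    have hdecomp : ((M ⊓ N).orthogonalProjectionOnto n : H)
        + (n - ((M ⊓ N).orthogonalProjectionOnto n : H)) = n := by abel
    rw [← hdecomp]
    exact Submodule.add_mem_sup ((M ⊓ N).orthogonalProjectionOnto n).2.1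
      ⟨Submodule.sub_mem N hn ((M ⊓ N).orthogonalProjectionOnto n).2.2,
        Submodule.sub_starProjection_mem_orthogonal n⟩
  -- the range of A ∘ B is A(M)
  have hrangeAB : LinearMap.range ((A.comp B : H →L[ℂ] H) : H →ₗ[ℂ] H) = Submodule.map (A : H →ₗ[ℂ] H) M := by
    ext x
    simp only [LinearMap.mem_range, Submodule.mem_map, ContinuousLinearMap.coe_comp',
      Function.comp_apply, hMdef]
    constructor
    · rintro ⟨y, rfl⟩; exact ⟨B y, ⟨y, rfl⟩, rfl⟩
    · rintro ⟨u, ⟨y, rfl⟩, rfl⟩; exact ⟨y, rfl⟩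
  -- the operator (m, n) ↦ m + n
  set Φ : (M × N' : Type _) →L[ℂ] H :=
    (M.subtypeL.comp (ContinuousLinearMap.fst ℂ M N'))
      + (N'.subtypeL.comp (ContinuousLinearMap.snd ℂ M N')) with hΦdef
  have hΦ : ∀ p : M × N', Φ p = (p.1 : H) + (p.2 : H) := fun p => rfl
  constructor
  · -- closed range ⟹ cosine < 1
    intro h
    have hMN_closed : IsClosed ((M ⊔ N : Submodule ℂ H) : Set H) := by
      have hco : M ⊔ N = Submodule.comap (A : H →ₗ[ℂ] H) (Submodule.map (A : H →ₗ[ℂ] H) M) :=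
        (Submodule.comap_map_eq (A : H →ₗ[ℂ] H) M).symm
      rw [hrangeAB] at h
      rw [hco]
      exact h.preimage A.continuous
    have hMN'_closed : IsClosed ((M ⊔ N' : Submodule ℂ H) : Set H) := by
      rw [hsup]; exact hMN_closed
    haveI : CompleteSpace (M ⊔ N' : Submodule ℂ H) := hMN'_closed.completeSpace_coe
    set Φ' : (M × N' : Type _) →L[ℂ] (M ⊔ N' : Submodule ℂ H) :=
      Φ.codRestrict (M ⊔ N') (fun p => by
        rw [hΦ]; exact Submodule.add_mem_sup p.1.2 p.2.2) with hΦ'def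
    have hMinfN' : M ⊓ N' = ⊥ := by
      rw [eq_bot_iff]
      rintro x ⟨hxM, hxN, hxS⟩
      have h0 : (inner ℂ x x : ℂ) = 0 :=
        (Submodule.mem_orthogonal _ x).1 hxS x ⟨hxM, hxN⟩
      simpa using inner_self_eq_zero.1 h0
    have hker : LinearMap.ker (Φ' : (M × N' : Type _) →ₗ[ℂ] (M ⊔ N' : Submodule ℂ H)) = ⊥ := by
      rw [Submodule.eq_bot_iff]
      rintro p hp
      have h0 : (p.1 : H) + (p.2 : H) = 0 := by
        have := congrArg (Subtype.val) hp
        simpa [hΦ'def, hΦ] using this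
      have hp1 : (p.1 : H) ∈ M ⊓ N' := by
        refine ⟨p.1.2, ?_⟩
        have : (p.1 : H) = -(p.2 : H) := eq_neg_of_add_eq_zero_left h0
        rw [this]
        exact Submodule.neg_mem _ p.2.2
      have hp1z : (p.1 : H) = 0 := by
        rw [hMinfN'] at hp1
        simpa using hp1
      have hp2z : (p.2 : H) = 0 := by
        rw [hp1z, zero_add] at h0
        exact h0
      have : p = 0 := by
        apply Prod.ext <;> apply Subtype.ext <;> simp [hp1z, hp2z]
      simp [this]
    have hsurj : LinearMap.range (Φ' : (M × N' : Type _) →ₗ[ℂ] (M ⊔ N' : Submodule ℂ H)) = ⊤ := by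
      rw [LinearMap.range_eq_top]
      rintro ⟨y, hy⟩
      obtain ⟨m, hm, n, hn, hmn⟩ := Submodule.mem_sup.1 hy
      exact ⟨(⟨m, hm⟩, ⟨n, hn⟩), Subtype.ext (by simpa [hΦ'def, hΦ] using hmn)⟩
    set e := ContinuousLinearEquiv.ofBijective Φ' hker hsurj with he
    set C : ℝ := ‖(e.symm : (M ⊔ N' : Submodule ℂ H) →L[ℂ] (M × N' : Type _))‖ with hCdef
    have hC : ∀ m ∈ M, ∀ n ∈ N', ‖m‖ ≤ C * ‖m + n‖ := by
      intro m hm n hn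
      set p : (M × N' : Type _) := (⟨m, hm⟩, ⟨n, hn⟩) with hpdef
      have h1 : e.symm (e p) = p := e.symm_apply_apply p
      have h2 : ‖e p‖ = ‖m + n‖ := by
        have : e p = Φ' p := rfl
        rw [this]
        rfl
      calc ‖m‖ ≤ max ‖m‖ ‖n‖ := le_max_left _ _
        _ = ‖p‖ := (Prod.norm_def p).symm
        _ = ‖e.symm (e p)‖ := by rw [h1]
        _ ≤ C * ‖e p‖ :=
            (e.symm : (M ⊔ N' : Submodule ℂ H) →L[ℂ] (M × N' : Type _)).le_opNorm _
        _ = C * ‖m + n‖ := by rw [h2]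
    have hbnd := inner_bound_of_norm_le hC
    set D := max C 1 with hDdef
    have hD1 : (1 : ℝ) ≤ D := le_max_right _ _
    set ρ : ℝ := 1 - 1 / (2 * D ^ 2) with hρdef
    have hρ0 : 0 ≤ ρ := by
      rw [hρdef, sub_nonneg, div_le_one (by positivity)]
      nlinarith
    have hρ1 : ρ < 1 := by
      rw [hρdef]
      have : 0 < 1 / (2 * D ^ 2) := by positivity
      linarith
    refine lt_of_le_of_lt ?_ hρ1
    show ‖(projCLM M hB).comp ((projCLM N hN).comp (projCLM S hSc))‖ ≤ ρ
    refine ContinuousLinearMap.opNorm_le_bound _ hρ0 ?_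
    intro x
    rw [ContinuousLinearMap.comp_apply, ContinuousLinearMap.comp_apply]
    set y : H := projCLM N hN (projCLM S hSc x) with hy
    have hyN : y ∈ N := projCLM_apply_mem N hN _
    have hyS : y ∈ S := by
      rw [hSdef, Submodule.mem_orthogonal]
      intro u hu
      calc (inner ℂ u y : ℂ) = inner ℂ (projCLM N hN u) (projCLM S hSc x) := by
            rw [hy, inner_projCLM]
        _ = inner ℂ u (projCLM S hSc x) := by rw [projCLM_eq_self N hN hu.2]
        _ = 0 := Submodule.inner_right_of_mem_orthogonal hu (projCLM_apply_mem S hSc x)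
    have hyx : ‖y‖ ≤ ‖x‖ := le_trans (norm_projCLM_le N hN _) (norm_projCLM_le S hSc x)
    set z : H := projCLM M hB y with hz
    have hzM : z ∈ M := projCLM_apply_mem M hB y
    have hinnerzy : (inner ℂ z y : ℂ) = inner ℂ z z := by
      have h0 : (inner ℂ z (y - z) : ℂ) = 0 :=
        Submodule.inner_right_of_mem_orthogonal hzM (sub_projCLM_mem_orthogonal M hB y)
      calc (inner ℂ z y : ℂ) = inner ℂ z (z + (y - z)) := by rw [add_sub_cancel]
        _ = inner ℂ z z + inner ℂ z (y - z) := inner_add_right z z (y - z)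
        _ = inner ℂ z z := by rw [h0, add_zero]
    have hz2 : ‖z‖ ^ 2 ≤ ρ * (‖z‖ * ‖y‖) := by
      calc ‖z‖ ^ 2 = RCLike.re (inner ℂ z z : ℂ) := (inner_self_eq_norm_sq z).symm
        _ = RCLike.re (inner ℂ z y : ℂ) := by rw [hinnerzy]
        _ ≤ ‖(inner ℂ z y : ℂ)‖ := RCLike.re_le_norm _
        _ ≤ ρ * (‖z‖ * ‖y‖) := hbnd z hzM y ⟨hyN, hyS⟩
    have hzle : ‖z‖ ≤ ρ * ‖y‖ := by
      rcases eq_or_lt_of_le (norm_nonneg z) with h0 | h0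
      · rw [← h0]
        exact mul_nonneg hρ0 (norm_nonneg y)
      · nlinarith
    calc ‖projCLM M hB y‖ = ‖z‖ := by rw [hz]
      _ ≤ ρ * ‖y‖ := hzle
      _ ≤ ρ * ‖x‖ := mul_le_mul_of_nonneg_left hyx hρ0
  · -- cosine < 1 ⟹ closed range
    intro hc
    set cop : H →L[ℂ] H :=
      (projCLM M hB).comp ((projCLM N hN).comp (projCLM S hSc)) with hcopdef
    have hc1 : ‖cop‖ < 1 := hc
    have hc0 : (0 : ℝ) ≤ ‖cop‖ := norm_nonneg _
    have key : ∀ n ∈ N', ‖projCLM M hB n‖ ≤ ‖cop‖ * ‖n‖ := by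
      intro n hn
      have h1 : cop n = projCLM M hB n := by
        rw [hcopdef, ContinuousLinearMap.comp_apply, ContinuousLinearMap.comp_apply,
          projCLM_eq_self S hSc hn.2, projCLM_eq_self N hN hn.1]
      rw [← h1]
      exact cop.le_opNorm n
    have hinnerb : ∀ m ∈ M, ∀ n ∈ N', ‖(inner ℂ m n : ℂ)‖ ≤ ‖cop‖ * (‖m‖ * ‖n‖) := by
      intro m hm n hn
      have h0 : (inner ℂ m (n - projCLM M hB n) : ℂ) = 0 :=
        Submodule.inner_right_of_mem_orthogonal hm (sub_projCLM_mem_orthogonal M hB n)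
      have h1 : (inner ℂ m n : ℂ) = inner ℂ m (projCLM M hB n) := by
        calc (inner ℂ m n : ℂ) = inner ℂ m (projCLM M hB n + (n - projCLM M hB n)) := by
              rw [add_sub_cancel]
          _ = inner ℂ m (projCLM M hB n) + inner ℂ m (n - projCLM M hB n) := inner_add_right _ _ _
          _ = inner ℂ m (projCLM M hB n) := by rw [h0, add_zero]
      calc ‖(inner ℂ m n : ℂ)‖ = ‖(inner ℂ m (projCLM M hB n) : ℂ)‖ := by rw [h1]
        _ ≤ ‖m‖ * ‖projCLM M hB n‖ := norm_inner_le_norm m _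
        _ ≤ ‖m‖ * (‖cop‖ * ‖n‖) :=
            mul_le_mul_of_nonneg_left (key n hn) (norm_nonneg m)
        _ = ‖cop‖ * (‖m‖ * ‖n‖) := by ring
    set k : ℝ := Real.sqrt (1 - ‖cop‖) with hkdef
    have hk0 : 0 < k := Real.sqrt_pos.2 (by linarith)
    have hbound : ∀ p : (M × N' : Type _), ‖p‖ ≤ k⁻¹ * ‖Φ p‖ := by
      intro p
      set m : H := (p.1 : H) with hm
      set n : H := (p.2 : H) with hn
      have hre : -(‖cop‖ * (‖m‖ * ‖n‖)) ≤ RCLike.re (inner ℂ m n : ℂ) := by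
        have h1 : ‖(inner ℂ m n : ℂ)‖ ≤ ‖cop‖ * (‖m‖ * ‖n‖) := hinnerb m p.1.2 n p.2.2
        have h2 : -‖(inner ℂ m n : ℂ)‖ ≤ RCLike.re (inner ℂ m n : ℂ) :=
          neg_le_of_neg_le (by simpa using (RCLike.re_le_norm (-(inner ℂ m n : ℂ))))
        linarith
      have hΦsq : (1 - ‖cop‖) * ‖p‖ ^ 2 ≤ ‖Φ p‖ ^ 2 := by
        rw [hΦ p, norm_add_sq (𝕜 := ℂ)]
        have hmaxm : ‖p‖ = max ‖m‖ ‖n‖ := Prod.norm_def p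
        have hple : ‖p‖ ^ 2 ≤ ‖m‖ ^ 2 + ‖n‖ ^ 2 := by
          rw [hmaxm]
          rcases le_total ‖m‖ ‖n‖ with hle | hle
          · rw [max_eq_right hle]; nlinarith [norm_nonneg m]
          · rw [max_eq_left hle]; nlinarith [norm_nonneg n]
        nlinarith [hre, norm_nonneg m, norm_nonneg n, sq_nonneg (‖m‖ - ‖n‖), hc0]
      have hksq : (k * ‖p‖) ^ 2 ≤ ‖Φ p‖ ^ 2 := by
        have hk2 : k ^ 2 = 1 - ‖cop‖ := Real.sq_sqrt (by linarith)
        calc (k * ‖p‖) ^ 2 = k ^ 2 * ‖p‖ ^ 2 := by ring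
          _ = (1 - ‖cop‖) * ‖p‖ ^ 2 := by rw [hk2]
          _ ≤ ‖Φ p‖ ^ 2 := hΦsq
      have hkp : k * ‖p‖ ≤ ‖Φ p‖ := by
        have h1 : 0 ≤ k * ‖p‖ := mul_nonneg hk0.le (norm_nonneg p)
        nlinarith [norm_nonneg (Φ p)]
      rw [← mul_le_mul_iff_right₀ hk0, ← mul_assoc, mul_inv_cancel₀ hk0.ne', one_mul]
      exact hkp
    have hal : AntilipschitzWith (k⁻¹).toNNReal Φ := by
      apply Φ.antilipschitz_of_bound
      intro x
      rw [Real.coe_toNNReal _ (by positivity)]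
      exact hbound x
    have hclr : IsClosed (Set.range Φ) := hal.isClosed_range Φ.uniformContinuous
    have hrangeΦ : Set.range Φ = ((M ⊔ N' : Submodule ℂ H) : Set H) := by
      ext v
      constructor
      · rintro ⟨p, rfl⟩
        rw [hΦ p]
        exact Submodule.add_mem_sup p.1.2 p.2.2
      · intro hv
        obtain ⟨m, hm, n, hn, hmn⟩ := Submodule.mem_sup.1 hv
        exact ⟨(⟨m, hm⟩, ⟨n, hn⟩), by rw [hΦ]; exact hmn⟩
    have hMN_closed : IsClosed ((M ⊔ N : Submodule ℂ H) : Set H) := by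
      rw [← hsup, ← hrangeΦ]
      exact hclr
    -- now conclude
    have hmapN : Submodule.map (A : H →ₗ[ℂ] H) N = ⊥ := by
      rw [eq_bot_iff]
      rintro _ ⟨x, hx, rfl⟩
      simpa [hNdef] using hx
    have hmapeq : Submodule.map (A : H →ₗ[ℂ] H) (M ⊔ N) = Submodule.map (A : H →ₗ[ℂ] H) M := by
      rw [Submodule.map_sup, hmapN, sup_bot_eq]
    rw [hrangeAB, ← hmapeq]
    exact isClosed_map_of_ker_le A hA (M ⊔ N) hMN_closed le_sup_right
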